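/- Let a ∈ ℝ, δ ≥ 0, 0 ≤ σ < 1/2, and ε_i, ε_j ∈ ℝ satisfy |ε_i| ≤ δ + σ·|a + ε_i − ε_j| and |ε_j| ≤ δ + σ·|a + ε_i − ε_j|. Then |a + ε_i − ε_j| ≤ (|a| + 2δ)/(1−2σ), max(|ε_i|, |ε_j|) ≤ δ/(1−2σ) + (σ/(1−2σ))·|a|, and consequently |ε_i − ε_j| ≤ 2δ/(1−2σ) + (2σ/(1−2σ))·|a|. -/

import Mathlib

/-- bounds on the triggering-induced disturbance.  If
`|ε_i|, |ε_j| ≤ δ + σ|a + ε_i - ε_j|` with `δ ≥ 0` and `0 ≤ σ < 1/2`, then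
`|a + ε_i - ε_j| ≤ (|a| + 2δ)/(1-2σ)`,
`max(|ε_i|,|ε_j|) ≤ δ/(1-2σ) + (σ/(1-2σ))|a|`, and
`|ε_i - ε_j| ≤ 2δ/(1-2σ) + (2σ/(1-2σ))|a|`. -/
theorem trigger_error_bounds
    (a δ σ εi εj : ℝ) (hδ : 0 ≤ δ) (hσ0 : 0 ≤ σ) (hσ : σ < 1/2)
    (hi : |εi| ≤ δ + σ * |a + εi - εj|)
    (hj : |εj| ≤ δ + σ * |a + εi - εj|) :
    |a + εi - εj| ≤ (|a| + 2 * δ) / (1 - 2 * σ) ∧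
    max |εi| |εj| ≤ δ / (1 - 2 * σ) + (σ / (1 - 2 * σ)) * |a| ∧
    |εi - εj| ≤ 2 * δ / (1 - 2 * σ) + (2 * σ / (1 - 2 * σ)) * |a| := by
  have hpos : 0 < 1 - 2 * σ := by linarith
  have htri : |a + εi - εj| ≤ |a| + |εi| + |εj| := by
    calc |a + εi - εj| ≤ |a + εi| + |εj| := abs_sub _ _
      _ ≤ |a| + |εi| + |εj| := by have := abs_add_le a εi; linarith
  have h1 : |a + εi - εj| ≤ (|a| + 2 * δ) / (1 - 2 * σ) := by
    rw [le_div_iff₀ hpos]; nlinarith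
  have h2 : max |εi| |εj| ≤ δ / (1 - 2 * σ) + (σ / (1 - 2 * σ)) * |a| := by
    have key : δ + σ * |a + εi - εj| ≤ δ / (1 - 2 * σ) + (σ / (1 - 2 * σ)) * |a| := by
      have h3 := mul_le_mul_of_nonneg_left h1 hσ0
      have heq : δ + σ * ((|a| + 2 * δ) / (1 - 2 * σ)) = δ / (1 - 2 * σ) + (σ / (1 - 2 * σ)) * |a| := by
        rw [mul_div_assoc', div_mul_eq_mul_div, add_div' _ _ _ hpos.ne', ← add_div]; congr 1; ring
      linarith [heq]
    exact max_le (hi.trans key) (hj.trans key)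
  refine ⟨h1, h2, ?_⟩
  have := abs_sub εi εj
  have hmi := le_max_left |εi| |εj|
  have hmj := le_max_right |εi| |εj|
  calc |εi - εj| ≤ |εi| + |εj| := abs_sub _ _
    _ ≤ 2 * (δ / (1 - 2 * σ) + (σ / (1 - 2 * σ)) * |a|) := by linarith [hmi.trans h2, hmj.trans h2]
    _ = 2 * δ / (1 - 2 * σ) + (2 * σ / (1 - 2 * σ)) * |a| := by ring
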